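/- Let ρ_1, ρ_2 be positive definite Hermitian matrices on a finite-dimensional complex inner product space with Tr ρ_1 = Tr ρ_2 = 1, and define ψ(t) := log Tr[ρ_1^t ρ_2^{1−t}] for t ∈ [0,1] (real powers via the functional calculus). Then: (i) ψ(1) = 0; (ii) ψ is differentiable on (0,1); (iii) lim_{t↗1} ψ'(t) = Tr[ρ_1(log ρ_1 − log ρ_2)]; and (iv) sup_{0 ≤ t < 1} (−ψ(t))/(1−t) = Tr[ρ_1(log ρ_1 − log ρ_2)], i.e., the Hoeffding distance with parameter 0 equals the relative entropy S(ρ_1‖ρ_2). -/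

import Mathlib

open Matrix Filter Set
open scoped ComplexOrder

noncomputable section

variable {n : Type*} [Fintype n] [DecidableEq n]

/-- Real power of a positive matrix via the continuous functional calculus. -/
def mpow (A : Matrix n n ℂ) (t : ℝ) : Matrix n n ℂ := cfc (fun x : ℝ => x ^ t) A

/-- Logarithm of a positive definite matrix via the continuous functional calculus. -/
def mlog (A : Matrix n n ℂ) : Matrix n n ℂ := cfc Real.log A

/-- `ψ(t) = log Tr[ρ₁^t ρ₂^{1−t}]`. -/
def psiStates (ρ₁ ρ₂ : Matrix n n ℂ) (t : ℝ) : ℝ :=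
  Real.log ((mpow ρ₁ t * mpow ρ₂ (1 - t)).trace.re)

/-! ### Auxiliary material -/

lemma trace_cfc_mul_cfc (A B : Matrix n n ℂ) (hA : A.IsHermitian) (hB : B.IsHermitian)
    (f g : ℝ → ℝ) :
    (cfc f A * cfc g B).trace =
      ((∑ i, ∑ j, ‖((star (hA.eigenvectorUnitary : Matrix n n ℂ) *
          (hB.eigenvectorUnitary : Matrix n n ℂ)) i j)‖ ^ 2 *
          (f (hA.eigenvalues i) * g (hB.eigenvalues j)) : ℝ) : ℂ) := by
  rw [hA.cfc_eq, hB.cfc_eq]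
  unfold Matrix.IsHermitian.cfc
  simp only [Unitary.conjStarAlgAut_apply, Unitary.coe_star]
  set U₁ : Matrix n n ℂ := (hA.eigenvectorUnitary : Matrix n n ℂ)
  set U₂ : Matrix n n ℂ := (hB.eigenvectorUnitary : Matrix n n ℂ)
  set Df : Matrix n n ℂ := diagonal (RCLike.ofReal ∘ f ∘ hA.eigenvalues)
  set Dg : Matrix n n ℂ := diagonal (RCLike.ofReal ∘ g ∘ hB.eigenvalues)
  have h1 : (U₁ * Df * star U₁ * (U₂ * Dg * star U₂)).trace
      = (Df * (star U₁ * U₂) * Dg * star (star U₁ * U₂)).trace := by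
    rw [show U₁ * Df * star U₁ * (U₂ * Dg * star U₂) = U₁ * (Df * (star U₁ * U₂) * Dg * star U₂) by
      simp only [mul_assoc]]
    rw [Matrix.trace_mul_comm]
    simp only [Matrix.star_mul, star_star, mul_assoc]
  rw [h1]
  set W : Matrix n n ℂ := star U₁ * U₂ with hW
  have h2 : (Df * W * Dg * star W).trace = ∑ i, ∑ j, Df i i * W i j * Dg j j * (star W) j i := by
    rw [show Df * W * Dg * star W = (Df * W) * (Dg * star W) by simp only [mul_assoc]]
    simp only [Matrix.trace, Matrix.diag, Matrix.mul_apply, Df, Dg, diagonal_apply, ite_mul,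
      zero_mul, Finset.sum_ite_eq, Finset.mem_univ, if_true]
    exact Finset.sum_congr rfl fun i _ => Finset.sum_congr rfl fun j _ => by ring
  rw [h2]
  push_cast
  refine Finset.sum_congr rfl fun i _ => Finset.sum_congr rfl fun j _ => ?_
  have hc : (star W) j i = (starRingEnd ℂ) (W i j) := by simp [Matrix.star_apply]
  rw [hc]
  have hm : W i j * (starRingEnd ℂ) (W i j) = (‖W i j‖ : ℂ) ^ 2 := Complex.mul_conj' (W i j)
  rw [show Df i i * W i j * Dg j j * (starRingEnd ℂ) (W i j)
      = Df i i * Dg j j * (W i j * (starRingEnd ℂ) (W i j)) by ring, hm]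
  simp only [Df, Dg, diagonal_apply, if_true, Function.comp_apply]
  exact mul_comm _ _

/-- Auxiliary sum `∑ p, c p · a p ^ t · b p ^ (1−t) · (log a p − log b p) ^ m`. -/
def hzreG {ι : Type*} [Fintype ι] (c a b : ι → ℝ) (m : ℕ) (t : ℝ) : ℝ :=
  ∑ p, c p * a p ^ t * b p ^ (1 - t) * (Real.log (a p) - Real.log (b p)) ^ m

section core

variable {ι : Type*} [Fintype ι] {c a b : ι → ℝ}

lemma hzreG_hasDerivAt (ha : ∀ p, 0 < a p) (hb : ∀ p, 0 < b p) (m : ℕ) (t : ℝ) :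
    HasDerivAt (hzreG c a b m) (hzreG c a b (m + 1) t) t := by
  unfold hzreG
  refine HasDerivAt.fun_sum fun p _ => ?_
  have h1 : HasDerivAt (fun t : ℝ => a p ^ t) (a p ^ t * Real.log (a p)) t :=
    (Real.hasStrictDerivAt_const_rpow (ha p) t).hasDerivAt
  have h3 : HasDerivAt (fun t : ℝ => 1 - t) (-1) t := (hasDerivAt_id t).const_sub 1
  have h2 : HasDerivAt (fun t : ℝ => b p ^ (1 - t)) (-(b p ^ (1 - t) * Real.log (b p))) t := by
    have := ((Real.hasStrictDerivAt_const_rpow (hb p) (1 - t)).hasDerivAt).comp t h3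
    simpa [mul_comm, Function.comp_def] using this
  have := ((h1.const_mul (c p)).mul h2).mul_const ((Real.log (a p) - Real.log (b p)) ^ m)
  refine this.congr_deriv ?_
  ring

omit [Fintype ι] in
lemma hzreG_term_nonneg (hc : ∀ p, 0 ≤ c p) (ha : ∀ p, 0 < a p) (hb : ∀ p, 0 < b p)
    (t : ℝ) (p : ι) : 0 ≤ c p * a p ^ t * b p ^ (1 - t) :=
  mul_nonneg (mul_nonneg (hc p) (Real.rpow_pos_of_pos (ha p) t).le)
    (Real.rpow_pos_of_pos (hb p) (1 - t)).le

lemma hzreG_pos (hc : ∀ p, 0 ≤ c p) (ha : ∀ p, 0 < a p) (hb : ∀ p, 0 < b p)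
    (hex : ∃ p, 0 < c p) (t : ℝ) : 0 < hzreG c a b 0 t := by
  obtain ⟨q, hq⟩ := hex
  unfold hzreG
  refine Finset.sum_pos' (fun p _ => by
    simpa [pow_zero, mul_one] using hzreG_term_nonneg hc ha hb t p) ⟨q, Finset.mem_univ q, ?_⟩
  have := mul_pos (mul_pos hq (Real.rpow_pos_of_pos (ha q) t)) (Real.rpow_pos_of_pos (hb q) (1 - t))
  simpa [pow_zero, mul_one] using this

lemma hzreG_cauchy (hc : ∀ p, 0 ≤ c p) (ha : ∀ p, 0 < a p) (hb : ∀ p, 0 < b p) (t : ℝ) :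
    hzreG c a b 1 t ^ 2 ≤ hzreG c a b 0 t * hzreG c a b 2 t := by
  have key := Finset.sum_mul_sq_le_sq_mul_sq Finset.univ
    (fun p => Real.sqrt (c p * a p ^ t * b p ^ (1 - t)))
    (fun p => Real.sqrt (c p * a p ^ t * b p ^ (1 - t)) * (Real.log (a p) - Real.log (b p)))
  have hs : ∀ p : ι, Real.sqrt (c p * a p ^ t * b p ^ (1 - t)) ^ 2
      = c p * a p ^ t * b p ^ (1 - t) := fun p => Real.sq_sqrt (hzreG_term_nonneg hc ha hb t p)
  unfold hzreG
  calc (∑ p, c p * a p ^ t * b p ^ (1 - t) * (Real.log (a p) - Real.log (b p)) ^ 1) ^ 2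
      = (∑ p, Real.sqrt (c p * a p ^ t * b p ^ (1 - t)) *
          (Real.sqrt (c p * a p ^ t * b p ^ (1 - t)) * (Real.log (a p) - Real.log (b p)))) ^ 2 := by
        congr 1
        refine Finset.sum_congr rfl fun p _ => ?_
        rw [show Real.sqrt (c p * a p ^ t * b p ^ (1 - t)) *
            (Real.sqrt (c p * a p ^ t * b p ^ (1 - t)) * (Real.log (a p) - Real.log (b p)))
            = Real.sqrt (c p * a p ^ t * b p ^ (1 - t)) ^ 2 * (Real.log (a p) - Real.log (b p)) by
          ring, hs p]
        ring
    _ ≤ (∑ p, Real.sqrt (c p * a p ^ t * b p ^ (1 - t)) ^ 2) *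
        (∑ p, (Real.sqrt (c p * a p ^ t * b p ^ (1 - t)) * (Real.log (a p) - Real.log (b p))) ^ 2)
        := key
    _ = (∑ p, c p * a p ^ t * b p ^ (1 - t) * (Real.log (a p) - Real.log (b p)) ^ 0) *
        (∑ p, c p * a p ^ t * b p ^ (1 - t) * (Real.log (a p) - Real.log (b p)) ^ 2) := by
        congr 1
        · exact Finset.sum_congr rfl fun p _ => by rw [hs p]; ring
        · refine Finset.sum_congr rfl fun p _ => ?_
          rw [mul_pow, hs p]

lemma hzre_core (hc : ∀ p, 0 ≤ c p) (ha : ∀ p, 0 < a p) (hb : ∀ p, 0 < b p)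
    (h1 : ∑ p, c p * a p = 1) :
    Real.log (hzreG c a b 0 1) = 0 ∧
    (∀ t : ℝ, HasDerivAt (fun s => Real.log (hzreG c a b 0 s))
      (hzreG c a b 1 t / hzreG c a b 0 t) t) ∧
    Tendsto (fun t => hzreG c a b 1 t / hzreG c a b 0 t) (nhdsWithin 1 (Set.Iio 1))
      (nhds (∑ p, c p * (a p * (Real.log (a p) - Real.log (b p))))) ∧
    (⨆ t : Set.Ico (0 : ℝ) 1, (-Real.log (hzreG c a b 0 t)) / (1 - (t : ℝ)))
      = ∑ p, c p * (a p * (Real.log (a p) - Real.log (b p))) := by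
  have hex : ∃ p, 0 < c p := by
    by_contra h
    push_neg at h
    have hz : ∀ p, c p = 0 := fun p => le_antisymm (h p) (hc p)
    simp [hz] at h1
  have hpos : ∀ t, 0 < hzreG c a b 0 t := hzreG_pos hc ha hb hex
  set ψ : ℝ → ℝ := fun s => Real.log (hzreG c a b 0 s) with hψdef
  set L : ℝ := ∑ p, c p * (a p * (Real.log (a p) - Real.log (b p))) with hLdef
  have hG01 : hzreG c a b 0 1 = 1 := by
    have : hzreG c a b 0 1 = ∑ p, c p * a p := by
      unfold hzreG
      refine Finset.sum_congr rfl fun p _ => ?_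
      rw [Real.rpow_one, sub_self, Real.rpow_zero, pow_zero]; ring
    rw [this, h1]
  have hG11 : hzreG c a b 1 1 = L := by
    unfold hzreG
    rw [hLdef]
    refine Finset.sum_congr rfl fun p _ => ?_
    rw [Real.rpow_one, sub_self, Real.rpow_zero, pow_one]; ring
  have hψ1 : ψ 1 = 0 := by rw [hψdef]; simp [hG01]
  have hD : ∀ t : ℝ, HasDerivAt ψ (hzreG c a b 1 t / hzreG c a b 0 t) t := fun t =>
    (hzreG_hasDerivAt ha hb 0 t).log (hpos t).ne'
  set D : ℝ → ℝ := fun t => hzreG c a b 1 t / hzreG c a b 0 t with hDdef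
  have hDcont : ContinuousAt D 1 :=
    ContinuousAt.div (hzreG_hasDerivAt ha hb 1 1).continuousAt
      (hzreG_hasDerivAt ha hb 0 1).continuousAt (hpos 1).ne'
  have hD1 : D 1 = L := by rw [hDdef]; simp [hG01, hG11]
  have htend : Tendsto D (nhdsWithin 1 (Set.Iio 1)) (nhds L) := by
    rw [← hD1]
    exact hDcont.continuousWithinAt.tendsto
  have hD' : ∀ t : ℝ, HasDerivAt D
      ((hzreG c a b 2 t * hzreG c a b 0 t - hzreG c a b 1 t * hzreG c a b 1 t) /
        hzreG c a b 0 t ^ 2) t := fun t =>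
    (hzreG_hasDerivAt ha hb 1 t).div (hzreG_hasDerivAt ha hb 0 t) (hpos t).ne'
  have hderivψ : deriv ψ = D := funext fun t => (hD t).deriv
  have hconv : ConvexOn ℝ Set.univ ψ := by
    refine convexOn_of_deriv2_nonneg convex_univ
      (fun t _ => (hD t).continuousAt.continuousWithinAt)
      (fun t _ => ((hD t).differentiableAt).differentiableWithinAt) ?_ ?_
    · intro t _
      rw [hderivψ]
      exact ((hD' t).differentiableAt).differentiableWithinAt
    · intro t _
      have : deriv (deriv ψ) t = (hzreG c a b 2 t * hzreG c a b 0 t -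
          hzreG c a b 1 t * hzreG c a b 1 t) / hzreG c a b 0 t ^ 2 := by
        rw [hderivψ]; exact (hD' t).deriv
      show 0 ≤ deriv^[2] ψ t
      rw [Function.iterate_succ, Function.iterate_one, Function.comp_apply, this]
      apply div_nonneg _ (sq_nonneg _)
      have := hzreG_cauchy hc ha hb t
      nlinarith [this]
  have hDψ1 : HasDerivAt ψ L 1 := by rw [← hD1]; exact hD 1
  have hslope : ∀ t : ℝ, t ≠ 1 → slope ψ 1 t = -ψ t / (1 - t) := by
    intro t ht
    rw [slope_def_field, hψ1]
    rw [div_eq_div_iff (sub_ne_zero.mpr ht) (sub_ne_zero.mpr (Ne.symm ht))]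
    ring
  have hub : ∀ t : ℝ, t ∈ Set.Ico (0 : ℝ) 1 → -ψ t / (1 - t) ≤ L := by
    intro t ht
    rw [← hslope t ht.2.ne]
    rw [slope_comm]
    exact hconv.slope_le_of_hasDerivAt (Set.mem_univ t) (Set.mem_univ 1) ht.2 hDψ1
  haveI : Nonempty (Set.Ico (0 : ℝ) 1) := ⟨⟨0, le_refl 0, zero_lt_one⟩⟩
  have hBdd : BddAbove (Set.range fun t : Set.Ico (0 : ℝ) 1 => -ψ t / (1 - (t : ℝ))) := by
    refine ⟨L, ?_⟩
    rintro x ⟨⟨t, ht⟩, rfl⟩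
    exact hub t ht
  refine ⟨hψ1, hD, htend, le_antisymm (ciSup_le fun ⟨t, ht⟩ => hub t ht) ?_⟩
  have hslopetend : Tendsto (slope ψ 1) (nhdsWithin 1 (Set.Iio 1)) (nhds L) := by
    have := hasDerivAt_iff_tendsto_slope.mp hDψ1
    exact this.mono_left (nhdsWithin_mono 1 fun x hx => ne_of_lt hx)
  refine le_of_tendsto hslopetend ?_
  filter_upwards [Ioo_mem_nhdsLT_of_mem (show (1:ℝ) ∈ Set.Ioc (0:ℝ) 1 by constructor <;> norm_num)]
    with t ht
  rw [hslope t ht.2.ne]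
  exact le_ciSup hBdd (⟨t, ht.1.le, ht.2⟩ : Set.Ico (0 : ℝ) 1)

end core

/-- **Hoeffding distance with parameter 0 equals the relative entropy.**  For faithful density
matrices `ρ₁, ρ₂` and `ψ(t) = log Tr[ρ₁^t ρ₂^{1−t}]`: (i) `ψ(1) = 0`; (ii) `ψ` is
differentiable on `(0,1)`; (iii) `ψ'(t) → Tr[ρ₁(log ρ₁ − log ρ₂)]` as `t ↗ 1`; and (iv)
`sup_{0 ≤ t < 1} (−ψ(t))/(1−t) = Tr[ρ₁(log ρ₁ − log ρ₂)] = S(ρ₁‖ρ₂)`. -/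
theorem hoeffding_zero_eq_relative_entropy
    (ρ₁ ρ₂ : Matrix n n ℂ) (hρ₁ : ρ₁.PosDef) (hρ₂ : ρ₂.PosDef)
    (hτ₁ : ρ₁.trace = 1) (hτ₂ : ρ₂.trace = 1) :
    psiStates ρ₁ ρ₂ 1 = 0 ∧
      (∃ D : ℝ → ℝ,
        (∀ t ∈ Set.Ioo (0 : ℝ) 1, HasDerivAt (psiStates ρ₁ ρ₂) (D t) t) ∧
        Tendsto D (nhdsWithin 1 (Set.Iio 1))
          (nhds ((ρ₁ * (mlog ρ₁ - mlog ρ₂)).trace.re))) ∧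
      (⨆ t : Set.Ico (0 : ℝ) 1, (-psiStates ρ₁ ρ₂ t) / (1 - (t : ℝ))) =
        (ρ₁ * (mlog ρ₁ - mlog ρ₂)).trace.re := by
  have hA : ρ₁.IsHermitian := hρ₁.1
  have hB : ρ₂.IsHermitian := hρ₂.1
  set W : Matrix n n ℂ := star (hA.eigenvectorUnitary : Matrix n n ℂ) *
    (hB.eigenvectorUnitary : Matrix n n ℂ) with hWdef
  set c : n × n → ℝ := fun p => ‖W p.1 p.2‖ ^ 2 with hcdef
  set a : n × n → ℝ := fun p => hA.eigenvalues p.1 with hadef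
  set b : n × n → ℝ := fun p => hB.eigenvalues p.2 with hbdef
  have hc : ∀ p, 0 ≤ c p := fun p => sq_nonneg _
  have ha : ∀ p, 0 < a p := fun p => hρ₁.eigenvalues_pos p.1
  have hb : ∀ p, 0 < b p := fun p => hρ₂.eigenvalues_pos p.2
  have hfin : ∀ (A : Matrix n n ℂ) (f : ℝ → ℝ), ContinuousOn f (spectrum ℝ A) := by
    intro A f
    rw [continuousOn_iff_continuous_restrict]
    exact continuous_of_discreteTopology
  have key : ∀ f g : ℝ → ℝ, (cfc f ρ₁ * cfc g ρ₂).trace.re = ∑ p, c p * (f (a p) * g (b p)) := by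
    intro f g
    rw [trace_cfc_mul_cfc ρ₁ ρ₂ hA hB f g, Complex.ofReal_re]
    exact (Fintype.sum_prod_type (f := fun p : n × n => c p * (f (a p) * g (b p)))).symm
  have hid : cfc (id : ℝ → ℝ) ρ₁ = ρ₁ := cfc_id ℝ ρ₁ hA.isSelfAdjoint
  have hone : cfc (fun _ : ℝ => (1 : ℝ)) ρ₂ = 1 := cfc_const_one ℝ ρ₂ hB.isSelfAdjoint
  have h1 : ∑ p, c p * a p = 1 := by
    have hk := key id (fun _ => 1)
    rw [hid, hone, mul_one, hτ₁] at hk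
    simpa using hk.symm
  -- ψ identification
  have hpsi : psiStates ρ₁ ρ₂ = fun t => Real.log (hzreG c a b 0 t) := by
    funext t
    unfold psiStates mpow
    rw [key (fun x => x ^ t) (fun x => x ^ (1 - t))]
    unfold hzreG
    congr 1
    exact Finset.sum_congr rfl fun p _ => by rw [pow_zero]; ring
  -- relative entropy identification
  have hxlog : ρ₁ * mlog ρ₁ = cfc (fun x : ℝ => x * Real.log x) ρ₁ := by
    have hm := cfc_mul (a := ρ₁) (f := id) (g := Real.log) (hfin ρ₁ _) (hfin ρ₁ _)
    rw [hid] at hm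
    rw [mlog]
    exact hm.symm
  have hT1 : (ρ₁ * mlog ρ₁).trace.re = ∑ p, c p * ((a p * Real.log (a p)) * 1) := by
    rw [hxlog, show (cfc (fun x : ℝ => x * Real.log x) ρ₁).trace
        = (cfc (fun x : ℝ => x * Real.log x) ρ₁ * cfc (fun _ : ℝ => (1:ℝ)) ρ₂).trace by
      rw [hone, mul_one]]
    exact key _ _
  have hT2 : (ρ₁ * mlog ρ₂).trace.re = ∑ p, c p * (a p * Real.log (b p)) := by
    conv_lhs => rw [mlog, ← hid]
    exact key id Real.log
  have hL : (ρ₁ * (mlog ρ₁ - mlog ρ₂)).trace.re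
      = ∑ p, c p * (a p * (Real.log (a p) - Real.log (b p))) := by
    rw [mul_sub, Matrix.trace_sub, Complex.sub_re, hT1, hT2, ← Finset.sum_sub_distrib]
    exact Finset.sum_congr rfl fun p _ => by ring
  obtain ⟨c1, c2, c3, c4⟩ := hzre_core hc ha hb h1
  refine ⟨?_, ⟨fun t => hzreG c a b 1 t / hzreG c a b 0 t, fun t _ => ?_, ?_⟩, ?_⟩
  · rw [hpsi]; exact c1
  · rw [hpsi]; exact c2 t
  · rw [hL]; exact c3
  · simp only [hpsi]; rw [hL]; exact c4

end
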